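/- arXiv:1311.0620 — 3 statements merged into one kernel-verified Lean document; each statement's English description precedes it below -/
import Mathlib

section
/- If X is a modular element of the intersection lattice L(A) of a central hyperplane arrangement A, and Z is any element of L(A), then X ∩ Z is a modular element of the intersection lattice L(A^Z) of the restricted arrangement A^Z. -/
open Submodule

/-- The intersection lattice of the arrangement `A` with ambient space `Z`:
all subspaces of the form `Z ⊓ sInf S` for `S ⊆ A` (the empty intersection gives `Z`). -/
def ArrLatIn {V : Type*} [AddCommGroup V] [Module ℂ V] (Z : Submodule ℂ V)
    (A : Set (Submodule ℂ V)) : Set (Submodule ℂ V) :=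
  {X | ∃ S ⊆ A, X = Z ⊓ sInf S}

/-- `X` is a modular element of the lattice `ℒ` (ordered by reverse inclusion):
`X ∈ ℒ` and `X + Y ∈ ℒ` for every `Y ∈ ℒ`. -/
def ModularIn {V : Type*} [AddCommGroup V] [Module ℂ V]
    (ℒ : Set (Submodule ℂ V)) (X : Submodule ℂ V) : Prop :=
  X ∈ ℒ ∧ ∀ Y ∈ ℒ, X ⊔ Y ∈ ℒ

/-- The restriction of the arrangement `A` to the subspace `Z`:
the hyperplanes `Z ∩ H` for `H ∈ A` with `Z ⊄ H`. -/
def Restrict {V : Type*} [AddCommGroup V] [Module ℂ V]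
    (A : Set (Submodule ℂ V)) (Z : Submodule ℂ V) : Set (Submodule ℂ V) :=
  {W | ∃ H ∈ A, ¬ Z ≤ H ∧ W = Z ⊓ H}

/-- A (lattice of subspaces ordered by reverse inclusion) is supersolvable if it admits a
maximal chain `C 0 > C 1 > ... > C n` (top to bottom) consisting of modular elements. -/
def LatSupersolvable {V : Type*} [AddCommGroup V] [Module ℂ V]
    (ℒ : Set (Submodule ℂ V)) : Prop :=
  ∃ n, ∃ C : Fin (n + 1) → Submodule ℂ V,
    (∀ i, ModularIn ℒ (C i)) ∧
    (∀ W ∈ ℒ, W ≤ C 0) ∧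
    (∀ W ∈ ℒ, C (Fin.last n) ≤ W) ∧
    (∀ i : Fin n, C i.succ < C i.castSucc) ∧
    (∀ i : Fin n, ∀ W ∈ ℒ, ¬(C i.succ < W ∧ W < C i.castSucc))

/-- The product of two arrangements. -/
def ProdArr {V₁ V₂ : Type*} [AddCommGroup V₁] [Module ℂ V₁] [AddCommGroup V₂] [Module ℂ V₂]
    (A₁ : Set (Submodule ℂ V₁)) (A₂ : Set (Submodule ℂ V₂)) : Set (Submodule ℂ (V₁ × V₂)) :=
  ((fun H => H.prod (⊤ : Submodule ℂ V₂)) '' A₁) ∪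
    ((fun H => (⊤ : Submodule ℂ V₁).prod H) '' A₂)

/-- The coordinate hyperplane `ker x_i` in `ℂ^ℓ`. -/
noncomputable def coordH (ℓ : ℕ) (i : Fin ℓ) : Submodule ℂ (Fin ℓ → ℂ) :=
  LinearMap.ker (LinearMap.proj i : (Fin ℓ → ℂ) →ₗ[ℂ] ℂ)

/-- The hyperplane `ker (x_i - ζ x_j)` in `ℂ^ℓ`. -/
noncomputable def diffH (ℓ : ℕ) (i j : Fin ℓ) (ζ : ℂ) : Submodule ℂ (Fin ℓ → ℂ) :=
  LinearMap.ker ((LinearMap.proj i : (Fin ℓ → ℂ) →ₗ[ℂ] ℂ) - ζ • (LinearMap.proj j))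

/-- The intermediate arrangement `A^k_ℓ(r)`: the first `k` coordinate hyperplanes together with
all hyperplanes `ker (x_i - ζ x_j)` for `i < j` and `ζ` an `r`-th root of unity. -/
def interArr (r ℓ k : ℕ) : Set (Submodule ℂ (Fin ℓ → ℂ)) :=
  {H | ∃ i : Fin ℓ, (i : ℕ) < k ∧ H = coordH ℓ i} ∪
    {H | ∃ i j : Fin ℓ, i < j ∧ ∃ ζ : ℂ, ζ ^ r = 1 ∧ H = diffH ℓ i j ζ}

/-- The Boolean subarrangement `B^k_ℓ` of the first `k` coordinate hyperplanes of `ℂ^ℓ`. -/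
def boolArr (ℓ k : ℕ) : Set (Submodule ℂ (Fin ℓ → ℂ)) :=
  {H | ∃ i : Fin ℓ, (i : ℕ) < k ∧ H = coordH ℓ i}

/-- The degree-one polynomial corresponding to a linear form on `ℂ^n`. -/
noncomputable def linPoly {n : ℕ} (f : (Fin n → ℂ) →ₗ[ℂ] ℂ) : MvPolynomial (Fin n) ℂ :=
  ∑ i, MvPolynomial.C (f (Pi.single i 1)) * MvPolynomial.X i

/-- The module of derivations `D(Q) = {θ | θ(Q) ∈ Q·S}` is free with a homogeneous basis
`θ 0, ..., θ (n-1)` of polynomial degrees `e 0, ..., e (n-1)`. -/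
def IsFreeWithExponents (n : ℕ) (Q : MvPolynomial (Fin n) ℂ) (e : Fin n → ℕ) : Prop :=
  ∃ θ : Fin n → Derivation ℂ (MvPolynomial (Fin n) ℂ) (MvPolynomial (Fin n) ℂ),
    (∀ i, θ i Q ∈ Ideal.span {Q}) ∧
    (∀ i j, ((θ i) (MvPolynomial.X j)).IsHomogeneous (e i)) ∧
    (∀ c : Fin n → MvPolynomial (Fin n) ℂ, (∑ i, c i • θ i) = 0 → ∀ i, c i = 0) ∧
    (∀ η : Derivation ℂ (MvPolynomial (Fin n) ℂ) (MvPolynomial (Fin n) ℂ),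
      η Q ∈ Ideal.span {Q} →
      ∃ c : Fin n → MvPolynomial (Fin n) ℂ, η = ∑ i, c i • θ i)

/-- An arrangement is irreducible if it is not a product of two nonempty arrangements, i.e.
there is no nontrivial direct sum decomposition of the ambient space such that every
hyperplane contains one of the two summands. -/
def IsIrreducibleArr {V : Type*} [AddCommGroup V] [Module ℂ V]
    (A : Set (Submodule ℂ V)) : Prop :=
  ¬ ∃ V₁ V₂ : Submodule ℂ V, V₁ ≠ ⊥ ∧ V₂ ≠ ⊥ ∧ V₁ ⊓ V₂ = ⊥ ∧ V₁ ⊔ V₂ = ⊤ ∧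
      ∀ H ∈ A, V₁ ≤ H ∨ V₂ ≤ H

/-- The restriction of `A` to the hyperplane `H` is linearly isomorphic to the intermediate
arrangement `A^{k'}_{ℓ'}(r)`. -/
def RestrEquiv (r ℓ : ℕ) (A : Set (Submodule ℂ (Fin ℓ → ℂ))) (H : Submodule ℂ (Fin ℓ → ℂ))
    (ℓ' k' : ℕ) : Prop :=
  ∃ φ : (Fin ℓ' → ℂ) →ₗ[ℂ] (Fin ℓ → ℂ), Function.Injective φ ∧ LinearMap.range φ = H ∧
    Restrict A H = (fun K => Submodule.map φ K) '' interArr r ℓ' k'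

private lemma z_inf_image {V : Type*} [AddCommGroup V] [Module ℂ V]
    (Z : Submodule ℂ V) (T : Set (Submodule ℂ V)) :
    Z ⊓ sInf ((fun H => Z ⊓ H) '' T) = Z ⊓ sInf T := by
  apply le_antisymm
  · refine le_inf inf_le_left (le_sInf ?_)
    rintro H hH
    exact (inf_le_right.trans (sInf_le (Set.mem_image_of_mem _ hH))).trans inf_le_right
  · refine le_inf inf_le_left (le_sInf ?_)
    rintro W ⟨H, hH, rfl⟩
    exact le_inf inf_le_left (inf_le_right.trans (sInf_le hH))

private lemma top_lat_inf {V : Type*} [AddCommGroup V] [Module ℂ V]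
    (A : Set (Submodule ℂ V)) {P Q : Submodule ℂ V}
    (hP : P ∈ ArrLatIn ⊤ A) (hQ : Q ∈ ArrLatIn ⊤ A) : P ⊓ Q ∈ ArrLatIn ⊤ A := by
  obtain ⟨S, hS, rfl⟩ := hP
  obtain ⟨T, hT, rfl⟩ := hQ
  exact ⟨S ∪ T, Set.union_subset hS hT, by simp [sInf_union, inf_assoc]⟩

private lemma mem_restr_lat {V : Type*} [AddCommGroup V] [Module ℂ V]
    (A : Set (Submodule ℂ V)) (Z : Submodule ℂ V) (hZ : Z ∈ ArrLatIn ⊤ A)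
    (W : Submodule ℂ V) :
    W ∈ ArrLatIn Z (Restrict A Z) ↔ (W ∈ ArrLatIn ⊤ A ∧ W ≤ Z) := by
  obtain ⟨SZ, hSZ, hZeq⟩ := hZ
  rw [top_inf_eq] at hZeq
  constructor
  · rintro ⟨S, hS, rfl⟩
    refine ⟨?_, inf_le_left⟩
    refine ⟨SZ ∪ {H | H ∈ A ∧ ¬ Z ≤ H ∧ Z ⊓ H ∈ S},
      Set.union_subset hSZ (fun H hH => hH.1), ?_⟩
    rw [top_inf_eq, sInf_union, ← hZeq]
    apply le_antisymm
    · refine le_inf inf_le_left (le_sInf ?_)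
      rintro H ⟨-, -, hHS⟩
      exact (inf_le_right.trans (sInf_le hHS)).trans inf_le_right
    · refine le_inf inf_le_left (le_sInf ?_)
      intro w hw
      obtain ⟨H, hHA, hZH, rfl⟩ := hS hw
      exact le_inf inf_le_left (inf_le_right.trans (sInf_le ⟨hHA, hZH, hw⟩))
  · rintro ⟨⟨S, hS, rfl⟩, hWZ⟩
    rw [top_inf_eq] at hWZ ⊢
    refine ⟨(fun H => Z ⊓ H) '' {H | H ∈ S ∧ ¬ Z ≤ H}, ?_, ?_⟩
    · rintro w ⟨H, ⟨hHS, hZH⟩, rfl⟩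
      exact ⟨H, hS hHS, hZH, rfl⟩
    · rw [z_inf_image]
      apply le_antisymm
      · exact le_inf hWZ (le_sInf fun H hH => sInf_le hH.1)
      · refine le_sInf fun H hH => ?_
        by_cases h : Z ≤ H
        · exact inf_le_left.trans h
        · exact inf_le_right.trans (sInf_le ⟨hH, h⟩)

/-- If `X` is a modular element of `L(A)` and `Z ∈ L(A)`, then `X ∩ Z` is a
modular element of `L(A^Z)`. -/
theorem stmt_0 {V : Type*} [AddCommGroup V] [Module ℂ V]
    (A : Set (Submodule ℂ V)) (hfin : A.Finite) (hhyp : ∀ H ∈ A, IsCoatom H)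
    (Z : Submodule ℂ V) (hZ : Z ∈ ArrLatIn ⊤ A)
    (X : Submodule ℂ V) (hX : ModularIn (ArrLatIn ⊤ A) X) :
    ModularIn (ArrLatIn Z (Restrict A Z)) (X ⊓ Z) := by
  obtain ⟨hXmem, hXsup⟩ := hX
  constructor
  · exact (mem_restr_lat A Z hZ _).mpr ⟨top_lat_inf A hXmem hZ, inf_le_right⟩
  · intro Y hY
    obtain ⟨hYmem, hYZ⟩ := (mem_restr_lat A Z hZ Y).mp hY
    have key : (X ⊓ Z) ⊔ Y = (X ⊔ Y) ⊓ Z := by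
      rw [sup_comm (X ⊓ Z) Y, ← sup_inf_assoc_of_le X hYZ, sup_comm Y X]
    rw [key]
    exact (mem_restr_lat A Z hZ _).mpr
      ⟨top_lat_inf A (hXsup Y hYmem) hZ, inf_le_right⟩
end

section
/- Let A be a central 4-arrangement and Z ∈ L(A) of dimension 1. If the number of hyperplanes of A containing Z is strictly greater than the number of hyperplanes H ∈ A for which the restriction A^H is supersolvable, then Z is not a modular element of L(A). -/
open Submodule

section Aux

variable {A : Set (Submodule ℂ (Fin 4 → ℂ))} {H : Submodule ℂ (Fin 4 → ℂ)}

lemma arrLatIn_le {Z X : Submodule ℂ (Fin 4 → ℂ)} (hX : X ∈ ArrLatIn Z A) : X ≤ Z := by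
  obtain ⟨S, _, rfl⟩ := hX; exact inf_le_left

lemma restr_mem (hH : H ∈ A) {X : Submodule ℂ (Fin 4 → ℂ)}
    (hX : X ∈ ArrLatIn ⊤ A) (hXH : X ≤ H) : X ∈ ArrLatIn H (Restrict A H) := by
  obtain ⟨T, hTA, hXeq⟩ := hX
  rw [top_inf_eq] at hXeq
  refine ⟨(fun H' => H ⊓ H') '' {H' ∈ T | ¬ H ≤ H'}, ?_, ?_⟩
  · rintro W ⟨H', ⟨hT, hnle⟩, rfl⟩
    exact ⟨H', hTA hT, hnle, rfl⟩
  · apply le_antisymm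
    · refine le_inf hXH (le_sInf ?_)
      rintro W ⟨H', ⟨hT, _⟩, rfl⟩
      exact le_inf hXH (hXeq ▸ sInf_le hT)
    · rw [hXeq]
      refine le_sInf fun H' hT => ?_
      by_cases h : H ≤ H'
      · exact inf_le_left.trans h
      · exact le_trans inf_le_right (le_trans (sInf_le ⟨H', ⟨hT, h⟩, rfl⟩) inf_le_right)

lemma restr_mem_rev (hH : H ∈ A) {Y : Submodule ℂ (Fin 4 → ℂ)}
    (hY : Y ∈ ArrLatIn H (Restrict A H)) : Y ∈ ArrLatIn ⊤ A := by
  obtain ⟨S, hS, rfl⟩ := hY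
  refine ⟨insert H {H' ∈ A | ¬ H ≤ H' ∧ H ⊓ H' ∈ S}, ?_, ?_⟩
  · rintro H'' (rfl | ⟨hA, _, _⟩)
    · exact hH
    · exact hA
  · rw [top_inf_eq]
    apply le_antisymm
    · refine le_sInf ?_
      rintro H'' (rfl | ⟨_, _, hmem⟩)
      · exact inf_le_left
      · exact le_trans inf_le_right (le_trans (sInf_le hmem) inf_le_right)
    · refine le_inf (sInf_le (Set.mem_insert _ _)) (le_sInf fun W hW => ?_)
      obtain ⟨H', hA, hnle, rfl⟩ := hS hW
      exact le_inf (sInf_le (Set.mem_insert _ _))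
        (sInf_le (Set.mem_insert_iff.2 (Or.inr ⟨hA, hnle, hW⟩)))

lemma coatom_finrank (hH : IsCoatom H) : Module.finrank ℂ H = 3 := by
  have h4 : Module.finrank ℂ (Fin 4 → ℂ) = 4 := Module.finrank_fin_fun ℂ
  have hlt : Module.finrank ℂ H < 4 := by
    have := Submodule.finrank_lt_finrank_of_lt (lt_top_iff_ne_top.2 hH.1)
    rwa [finrank_top, h4] at this
  obtain ⟨v, -, hv⟩ := SetLike.exists_of_lt (lt_top_iff_ne_top.2 hH.1)
  have hv0 : v ≠ 0 := fun h => hv (h ▸ H.zero_mem)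
  have hsup : H ⊔ Submodule.span ℂ {v} = ⊤ := by
    refine hH.2 _ (lt_of_le_of_ne le_sup_left fun h => hv ?_)
    exact h ▸ Submodule.mem_sup_right (Submodule.mem_span_singleton_self v)
  have heq := Submodule.finrank_sup_add_finrank_inf_eq H (Submodule.span ℂ {v})
  rw [hsup, finrank_top, h4, finrank_span_singleton hv0] at heq
  omega

lemma key_supersolvable (hhyp : ∀ H ∈ A, IsCoatom H) {Z : Submodule ℂ (Fin 4 → ℂ)}
    (hZ : Z ∈ ArrLatIn ⊤ A) (hdim : Module.finrank ℂ ↥Z = 1)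
    (hmod : ModularIn (ArrLatIn ⊤ A) Z) (hH : H ∈ A) (hZH : Z ≤ H) :
    LatSupersolvable (ArrLatIn H (Restrict A H)) := by
  have h4 : Module.finrank ℂ (Fin 4 → ℂ) = 4 := Module.finrank_fin_fun ℂ
  have hHrank : Module.finrank ℂ H = 3 := coatom_finrank (hhyp H hH)
  have hZmem : Z ∈ ArrLatIn H (Restrict A H) := restr_mem hH hZ hZH
  obtain ⟨S, hS, hZeq⟩ := hZmem
  have hZmem : Z ∈ ArrLatIn H (Restrict A H) := restr_mem hH hZ hZH
  -- S is nonempty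
  have hZneH : Z ≠ H := fun h => by rw [h, hHrank] at hdim; omega
  obtain ⟨W, hW⟩ : S.Nonempty := by
    rcases S.eq_empty_or_nonempty with h | h
    · exfalso; apply hZneH; rw [hZeq, h, sInf_empty, inf_top_eq]
    · exact h
  obtain ⟨H', hH'A, hnle, hWeq⟩ := hS hW
  have hH'rank : Module.finrank ℂ H' = 3 := coatom_finrank (hhyp H' hH'A)
  have hsup : H ⊔ H' = ⊤ := by
    refine (hhyp H' hH'A).2 _ (lt_of_le_of_ne le_sup_right fun h => hnle ?_)
    exact h ▸ le_sup_left
  have hWrank : Module.finrank ℂ W = 2 := by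
    have heq := Submodule.finrank_sup_add_finrank_inf_eq H H'
    rw [hsup, finrank_top, h4, hHrank, hH'rank, ← hWeq] at heq
    omega
  have hWleH : W ≤ H := hWeq ▸ inf_le_left
  have hZleW : Z ≤ W := hZeq ▸ le_trans inf_le_right (sInf_le hW)
  have hWmem : W ∈ ArrLatIn H (Restrict A H) := by
    refine ⟨{W}, Set.singleton_subset_iff.2 (hS hW), ?_⟩
    rw [sInf_singleton, inf_eq_right.2 hWleH]
  have hHmem : H ∈ ArrLatIn H (Restrict A H) := by
    refine ⟨∅, Set.empty_subset _, ?_⟩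
    rw [sInf_empty, inf_top_eq]
  set b : Submodule ℂ (Fin 4 → ℂ) := H ⊓ sInf (Restrict A H) with hb
  have hbmem : b ∈ ArrLatIn H (Restrict A H) := ⟨Restrict A H, le_refl _, rfl⟩
  have hble : ∀ Y ∈ ArrLatIn H (Restrict A H), b ≤ Y := by
    rintro Y ⟨S', hS', rfl⟩
    exact inf_le_inf_left _ (sInf_le_sInf hS')
  -- modularity of the chain elements
  have hmodH : ModularIn (ArrLatIn H (Restrict A H)) H :=
    ⟨hHmem, fun Y hY => by rwa [sup_eq_left.2 (arrLatIn_le hY)]⟩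
  have hmodW : ModularIn (ArrLatIn H (Restrict A H)) W := by
    refine ⟨hWmem, fun Y hY => ?_⟩
    by_cases h : Y ≤ W
    · rwa [sup_eq_left.2 h]
    · have h1 : W < W ⊔ Y := by
        refine lt_of_le_of_ne le_sup_left fun he => h ?_
        have hy : Y ≤ W ⊔ Y := le_sup_right
        rwa [← he] at hy
      have h2 : W ⊔ Y ≤ H := sup_le hWleH (arrLatIn_le hY)
      have h3 := Submodule.finrank_lt_finrank_of_lt h1
      have h4' := Submodule.finrank_mono h2
      have : W ⊔ Y = H := Submodule.eq_of_le_of_finrank_le h2 (by omega)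
      rwa [this]
  have hmodZ : ModularIn (ArrLatIn H (Restrict A H)) Z := by
    refine ⟨hZmem, fun Y hY => ?_⟩
    exact restr_mem hH (hmod.2 Y (restr_mem_rev hH hY)) (sup_le hZH (arrLatIn_le hY))
  have hmodb : ModularIn (ArrLatIn H (Restrict A H)) b :=
    ⟨hbmem, fun Y hY => by rw [sup_eq_right.2 (hble Y hY)]; exact hY⟩
  have hbZ : b ≤ Z := hble Z hZmem
  have hbrank : Module.finrank ℂ b ≤ 1 := hdim ▸ Submodule.finrank_mono hbZ
  have hZltW : Z < W := lt_of_le_of_ne hZleW (fun h => by rw [h, hWrank] at hdim; omega)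
  have hWltH : W < H := lt_of_le_of_ne hWleH (fun h => by rw [h, hHrank] at hWrank; omega)
  interval_cases hbr : Module.finrank ℂ b
  · -- b = ⊥ : chain H > W > Z > ⊥
    have hbbot : b = ⊥ := Submodule.finrank_eq_zero.1 hbr
    rw [hbbot] at hbmem hmodb hble
    have hZbot : Z ≠ ⊥ := fun h => by rw [h, finrank_bot] at hdim; omega
    refine ⟨3, ![H, W, Z, ⊥], ?_, ?_, ?_, ?_, ?_⟩
    · intro i
      fin_cases i <;>
        simp only [Nat.succ_eq_add_one, Nat.reduceAdd, Fin.zero_eta, Fin.mk_one,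
          Fin.reduceFinMk, Fin.isValue, Matrix.cons_val_zero, Matrix.cons_val_one,
          Matrix.cons_val_two, Matrix.cons_val_succ, Matrix.tail_cons, Matrix.head_cons]
      exacts [hmodH, hmodW, hmodZ, hmodb]
    · intro Y hY
      simpa only [Matrix.cons_val_zero] using arrLatIn_le hY
    · intro Y hY
      simp [Fin.last]
    · intro i
      fin_cases i <;>
        simp only [Nat.succ_eq_add_one, Nat.reduceAdd, Fin.zero_eta, Fin.mk_one,
          Fin.reduceFinMk, Fin.isValue, Fin.succ_zero_eq_one, Fin.succ_one_eq_two,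
          Fin.castSucc_zero, Fin.castSucc_one, Fin.succ_mk, Fin.castSucc_mk,
          Matrix.cons_val_zero, Matrix.cons_val_one, Matrix.cons_val_two,
          Matrix.cons_val_succ, Matrix.tail_cons, Matrix.head_cons]
      exacts [hWltH, hZltW, hZbot.bot_lt]
    · intro i Y hY
      have e1 : Fin.castSucc (2 : Fin 3) = (2 : Fin 4) := by decide
      have e2 : Fin.succ (2 : Fin 3) = (3 : Fin 4) := by decide
      fin_cases i <;> rintro ⟨h1, h2⟩ <;>
        simp only [Nat.succ_eq_add_one, Nat.reduceAdd, Fin.zero_eta, Fin.mk_one,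
          Fin.reduceFinMk, Fin.isValue, Fin.succ_zero_eq_one, Fin.succ_one_eq_two,
          Fin.castSucc_zero, Fin.castSucc_one, Fin.succ_mk, Fin.castSucc_mk, e1, e2,
          Matrix.cons_val_zero, Matrix.cons_val_one, Matrix.cons_val_two,
          Matrix.cons_val_three, Matrix.cons_val_succ, Matrix.tail_cons,
          Matrix.head_cons] at h1 h2 <;>
        have r1 := Submodule.finrank_lt_finrank_of_lt h1 <;>
        have r2 := Submodule.finrank_lt_finrank_of_lt h2 <;>
        simp only [hHrank, hWrank, hdim, finrank_bot] at r1 r2 <;> omega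
  · -- b = Z : chain H > W > Z
    have hbZ' : b = Z := Submodule.eq_of_le_of_finrank_le hbZ (by omega)
    rw [hbZ'] at hble
    refine ⟨2, ![H, W, Z], ?_, ?_, ?_, ?_, ?_⟩
    · intro i
      fin_cases i <;>
        simp only [Nat.succ_eq_add_one, Nat.reduceAdd, Fin.zero_eta, Fin.mk_one,
          Fin.reduceFinMk, Fin.isValue, Matrix.cons_val_zero, Matrix.cons_val_one,
          Matrix.cons_val_two, Matrix.cons_val_succ, Matrix.tail_cons, Matrix.head_cons]
      exacts [hmodH, hmodW, hmodZ]
    · intro Y hY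
      simpa only [Matrix.cons_val_zero] using arrLatIn_le hY
    · intro Y hY
      simpa [Fin.last] using hble Y hY
    · intro i
      fin_cases i <;>
        simp only [Nat.succ_eq_add_one, Nat.reduceAdd, Fin.zero_eta, Fin.mk_one,
          Fin.reduceFinMk, Fin.isValue, Fin.succ_zero_eq_one, Fin.succ_one_eq_two,
          Fin.castSucc_zero, Fin.castSucc_one, Fin.succ_mk, Fin.castSucc_mk,
          Matrix.cons_val_zero, Matrix.cons_val_one, Matrix.cons_val_two,
          Matrix.cons_val_succ, Matrix.tail_cons, Matrix.head_cons]
      exacts [hWltH, hZltW]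
    · intro i Y hY
      fin_cases i <;> rintro ⟨h1, h2⟩ <;>
        simp only [Nat.succ_eq_add_one, Nat.reduceAdd, Fin.zero_eta, Fin.mk_one,
          Fin.reduceFinMk, Fin.isValue, Fin.succ_zero_eq_one, Fin.succ_one_eq_two,
          Fin.castSucc_zero, Fin.castSucc_one, Fin.succ_mk, Fin.castSucc_mk,
          Matrix.cons_val_zero, Matrix.cons_val_one, Matrix.cons_val_two,
          Matrix.cons_val_succ, Matrix.tail_cons, Matrix.head_cons] at h1 h2 <;>
        have r1 := Submodule.finrank_lt_finrank_of_lt h1 <;>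
        have r2 := Submodule.finrank_lt_finrank_of_lt h2 <;>
        simp only [hHrank, hWrank, hdim] at r1 r2 <;> omega

end Aux

/-- In a central 4-arrangement, if the number of hyperplanes containing a
dimension-1 flat `Z` exceeds the number of hyperplanes with supersolvable restriction, then
`Z` is not modular. -/
theorem stmt_5 (A : Set (Submodule ℂ (Fin 4 → ℂ))) (hfin : A.Finite)
    (hhyp : ∀ H ∈ A, IsCoatom H)
    (Z : Submodule ℂ (Fin 4 → ℂ)) (hZ : Z ∈ ArrLatIn ⊤ A)
    (hdim : Module.finrank ℂ ↥Z = 1)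
    (hcount : {H ∈ A | LatSupersolvable (ArrLatIn H (Restrict A H))}.ncard <
      {H ∈ A | Z ≤ H}.ncard) :
    ¬ ModularIn (ArrLatIn ⊤ A) Z := by
  intro hmod
  have hsub : {H ∈ A | Z ≤ H} ⊆ {H ∈ A | LatSupersolvable (ArrLatIn H (Restrict A H))} := by
    rintro H ⟨hH, hZH⟩
    exact ⟨hH, key_supersolvable hhyp hZ hdim hmod hH hZH⟩
  have hle := Set.ncard_le_ncard hsub (hfin.subset (fun H h => h.1))
  omega
end

section
/- For r ≥ 2, ℓ ≥ 3 and 0 ≤ k ≤ ℓ, every element of the intersection lattice of the Boolean subarrangement B^k_ℓ = {H_1, ..., H_k} (intersections of subsets of the first k coordinate hyperplanes of ℂ^ℓ) is a modular element of the intersection lattice of the intermediate arrangement A^k_ℓ(r). -/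
open Submodule

section StmtSevenAux

lemma mem_coordH' {ℓ : ℕ} (i : Fin ℓ) (x : Fin ℓ → ℂ) : x ∈ coordH ℓ i ↔ x i = 0 := by
  simp [coordH]

lemma mem_diffH' {ℓ : ℕ} (i j : Fin ℓ) (ζ : ℂ) (x : Fin ℓ → ℂ) :
    x ∈ diffH ℓ i j ζ ↔ x i = ζ * x j := by
  simp [diffH, sub_eq_zero]

lemma root_ne_zero' {r : ℕ} (hr : r ≠ 0) {c : ℂ} (hc : c ^ r = 1) : c ≠ 0 := by
  rintro rfl
  rw [zero_pow hr] at hc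
  exact zero_ne_one hc

/-- `z i = c * z j` holds for all `z ∈ Y`, with `c` an `r`-th root of unity. -/
def myRel (r ℓ : ℕ) (Y : Submodule ℂ (Fin ℓ → ℂ)) (i j : Fin ℓ) (c : ℂ) : Prop :=
  c ^ r = 1 ∧ ∀ z ∈ Y, z i = c * z j

open Classical in
/-- Lift of `v` restricted to `Del` to an element of `Y`. -/
noncomputable def liftY (r ℓ : ℕ) (Y : Submodule ℂ (Fin ℓ → ℂ)) (Del : Set (Fin ℓ))
    (v : Fin ℓ → ℂ) (m : Fin ℓ) : ℂ :=
  if h : ∃ p : Fin ℓ × ℂ, p.1 ∈ Del ∧ myRel r ℓ Y m p.1 p.2 then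
    h.choose.2 * v h.choose.1 else 0

variable {r ℓ : ℕ} {Y : Submodule ℂ (Fin ℓ → ℂ)} {Del : Set (Fin ℓ)} {v : Fin ℓ → ℂ}

section

variable (hr : r ≠ 0)
variable (hv : ∀ δ ∈ Del, ∀ δ' ∈ Del, ∀ c, myRel r ℓ Y δ δ' c → v δ = c * v δ')
variable (hv0 : ∀ δ ∈ Del, (∀ z ∈ Y, z δ = 0) → v δ = 0)

include hr hv in
lemma liftY_eq {m δ : Fin ℓ} {c : ℂ} (hδ : δ ∈ Del) (hrel : myRel r ℓ Y m δ c) :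
    liftY r ℓ Y Del v m = c * v δ := by
  have hP : ∃ p : Fin ℓ × ℂ, p.1 ∈ Del ∧ myRel r ℓ Y m p.1 p.2 := ⟨(δ, c), hδ, hrel⟩
  rw [liftY, dif_pos hP]
  obtain ⟨h1, h2⟩ := hP.choose_spec
  set δ₀ := hP.choose.1
  set c₀ := hP.choose.2
  have hc₀ : c₀ ≠ 0 := root_ne_zero' hr h2.1
  have hrel' : myRel r ℓ Y δ₀ δ (c₀⁻¹ * c) := by
    refine ⟨by rw [mul_pow, inv_pow, h2.1, hrel.1, inv_one, one_mul], fun z hz => ?_⟩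
    have e1 := h2.2 z hz
    have e2 := hrel.2 z hz
    field_simp
    linear_combination e2 - e1
  rw [hv δ₀ h1 δ hδ _ hrel']
  field_simp

include hr hv in
lemma liftY_del {δ : Fin ℓ} (hδ : δ ∈ Del) : liftY r ℓ Y Del v δ = v δ := by
  have h1 : myRel r ℓ Y δ δ 1 := ⟨one_pow r, fun z _ => (one_mul _).symm⟩
  rw [liftY_eq hr hv hδ h1, one_mul]

include hr hv hv0 in
lemma liftY_coord {i : Fin ℓ} (h0 : ∀ z ∈ Y, z i = 0) : liftY r ℓ Y Del v i = 0 := by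
  by_cases hP : ∃ p : Fin ℓ × ℂ, p.1 ∈ Del ∧ myRel r ℓ Y i p.1 p.2
  · obtain ⟨⟨δ, c⟩, hδ, hrel⟩ := hP
    rw [liftY_eq hr hv hδ hrel]
    have hvδ : v δ = 0 := by
      refine hv0 δ hδ (fun z hz => ?_)
      have h1 := hrel.2 z hz
      rw [h0 z hz] at h1
      exact (mul_eq_zero.mp h1.symm).resolve_left (root_ne_zero' hr hrel.1)
    rw [hvδ, mul_zero]
  · rw [liftY, dif_neg hP]

include hr hv in
lemma liftY_diff {i j : Fin ℓ} {ζ : ℂ} (hζ : ζ ^ r = 1) (hall : ∀ z ∈ Y, z i = ζ * z j) :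
    liftY r ℓ Y Del v i = ζ * liftY r ℓ Y Del v j := by
  have hζ0 : ζ ≠ 0 := root_ne_zero' hr hζ
  by_cases hP : ∃ p : Fin ℓ × ℂ, p.1 ∈ Del ∧ myRel r ℓ Y j p.1 p.2
  · obtain ⟨⟨δ, c⟩, hδ, hrel⟩ := hP
    have hreli : myRel r ℓ Y i δ (ζ * c) :=
      ⟨by rw [mul_pow, hζ, hrel.1, one_mul],
        fun z hz => by rw [hall z hz, hrel.2 z hz]; ring⟩
    rw [liftY_eq hr hv hδ hreli,
      liftY_eq hr hv (v := v) hδ hrel]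
    ring
  · have hPi : ¬ ∃ p : Fin ℓ × ℂ, p.1 ∈ Del ∧ myRel r ℓ Y i p.1 p.2 := by
      rintro ⟨⟨δ, c⟩, hδ, hrel⟩
      refine hP ⟨⟨δ, ζ⁻¹ * c⟩, hδ,
        ⟨by rw [mul_pow, inv_pow, hζ, hrel.1, inv_one, one_mul], fun z hz => ?_⟩⟩
      have h1 := hall z hz
      have h2 := hrel.2 z hz
      field_simp
      linear_combination h2 - h1
    rw [liftY, liftY, dif_neg hP, dif_neg hPi, mul_zero]

end

end StmtSevenAux

/-- For `r ≥ 2`, `ℓ ≥ 3`, `0 ≤ k ≤ ℓ`, every element of the lattice of the Boolean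
subarrangement `B^k_ℓ` is modular in the lattice of `A^k_ℓ(r)`. -/
theorem stmt_7 (r ℓ k : ℕ) (hr : 2 ≤ r) (hℓ : 3 ≤ ℓ) (hk : k ≤ ℓ) :
    ∀ X ∈ ArrLatIn ⊤ (boolArr ℓ k), ModularIn (ArrLatIn ⊤ (interArr r ℓ k)) X := by
  classical
  have hr0 : r ≠ 0 := by omega
  rintro X ⟨S, hS, rfl⟩
  refine ⟨⟨S, fun H hH => Set.mem_union_left _ (hS hH), rfl⟩, ?_⟩
  rintro Y ⟨T, hT, rfl⟩
  set YY : Submodule ℂ (Fin ℓ → ℂ) := ⊤ ⊓ sInf T with hYY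
  set XX : Submodule ℂ (Fin ℓ → ℂ) := ⊤ ⊓ sInf S with hXX
  set Del : Set (Fin ℓ) := {i | (i : ℕ) < k ∧ coordH ℓ i ∈ S} with hDel
  set S' : Set (Submodule ℂ (Fin ℓ → ℂ)) := {H | H ∈ interArr r ℓ k ∧ XX ≤ H ∧ YY ≤ H}
    with hS'
  refine ⟨S', fun H hH => hH.1,
    le_antisymm (le_inf le_top (sup_le (le_sInf fun H hH => hH.2.1)
      (le_sInf fun H hH => hH.2.2))) ?_⟩
  intro v hv
  have hv' : ∀ H ∈ S', v ∈ H := fun H hH =>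
    Submodule.mem_sInf.mp (Submodule.mem_inf.mp hv).2 H hH
  have hXc : ∀ δ ∈ Del, XX ≤ coordH ℓ δ := fun δ hδ => inf_le_right.trans (sInf_le hδ.2)
  have hv0 : ∀ δ ∈ Del, (∀ z ∈ YY, z δ = 0) → v δ = 0 := by
    intro δ hδ h0
    have hH : coordH ℓ δ ∈ S' :=
      ⟨Set.mem_union_left _ ⟨δ, hδ.1, rfl⟩, hXc δ hδ,
        fun z hz => (mem_coordH' δ z).mpr (h0 z hz)⟩
    exact (mem_coordH' δ v).mp (hv' _ hH)
  have hdiffS' : ∀ δ δ' : Fin ℓ, δ ∈ Del → δ' ∈ Del → δ < δ' → ∀ c : ℂ, c ^ r = 1 →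
      (∀ z ∈ YY, z δ = c * z δ') → v δ = c * v δ' := by
    intro δ δ' hδ hδ' hlt c hc hmem
    have hH : diffH ℓ δ δ' c ∈ S' := by
      refine ⟨Set.mem_union_right _ ⟨δ, δ', hlt, c, hc, rfl⟩, ?_,
        fun z hz => (mem_diffH' δ δ' c z).mpr (hmem z hz)⟩
      intro x hx
      have h1 := (mem_coordH' δ x).mp (hXc δ hδ hx)
      have h2 := (mem_coordH' δ' x).mp (hXc δ' hδ' hx)
      exact (mem_diffH' δ δ' c x).mpr (by rw [h1, h2, mul_zero])
    exact (mem_diffH' δ δ' c v).mp (hv' _ hH)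
  have hvrel : ∀ δ ∈ Del, ∀ δ' ∈ Del, ∀ c, myRel r ℓ YY δ δ' c → v δ = c * v δ' := by
    intro δ hδ δ' hδ' c hrel
    rcases lt_trichotomy δ δ' with hlt | heq | hgt
    · exact hdiffS' δ δ' hδ hδ' hlt c hrel.1 hrel.2
    · subst heq
      by_cases hc1 : c = 1
      · rw [hc1, one_mul]
      · have hz0 : v δ = 0 := by
          refine hv0 δ hδ (fun z hz => ?_)
          have h1 := hrel.2 z hz
          have h2 : z δ * (1 - c) = 0 := by linear_combination h1
          rcases mul_eq_zero.mp h2 with h | h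
          · exact h
          · exact absurd (by linear_combination -h) hc1
        rw [hz0, mul_zero]
    · have hc0 : c ≠ 0 := root_ne_zero' hr0 hrel.1
      have hkey : v δ' = c⁻¹ * v δ := by
        refine hdiffS' δ' δ hδ' hδ hgt c⁻¹ (by rw [inv_pow, hrel.1, inv_one]) ?_
        intro z hz
        have h1 := hrel.2 z hz
        field_simp
        linear_combination -h1
      rw [hkey]
      field_simp
  have hwY : liftY r ℓ YY Del v ∈ YY := by
    refine Submodule.mem_inf.mpr ⟨mem_top, Submodule.mem_sInf.mpr fun H hH => ?_⟩
    have hYH : YY ≤ H := inf_le_right.trans (sInf_le hH)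
    rcases hT hH with ⟨i, hik, rfl⟩ | ⟨i, j, hij, ζ, hζ, rfl⟩
    · exact (mem_coordH' i _).mpr
        (liftY_coord hr0 hvrel hv0 (fun z hz => (mem_coordH' i z).mp (hYH hz)))
    · exact (mem_diffH' i j ζ _).mpr
        (liftY_diff hr0 hvrel hζ (fun z hz => (mem_diffH' i j ζ z).mp (hYH hz)))
  have hwX : v - liftY r ℓ YY Del v ∈ XX := by
    refine Submodule.mem_inf.mpr ⟨mem_top, Submodule.mem_sInf.mpr fun H hH => ?_⟩
    obtain ⟨i, hik, rfl⟩ := hS hH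
    refine (mem_coordH' i _).mpr ?_
    have hd := liftY_del (Del := Del) hr0 hvrel (show i ∈ Del from ⟨hik, hH⟩)
    simp [hd]
  have hdecomp : v = (v - liftY r ℓ YY Del v) + liftY r ℓ YY Del v := by abel
  rw [hdecomp]
  exact Submodule.add_mem_sup hwX hwY
end
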